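/- Let r ≥ 1 and f ∈ C^{r,1}([0,1]) with exact boundary data matrix F, and let F̂ be a 2×(r+1) real matrix that is 0-exact with respect to f. Let f_c and f̂_c on [−1,1] be the Hermite continuations equal to f on [0,1] and equal to P_r(F), respectively P_r(F̂), on [−1,0). Then there exists a constant C > 0 depending only on r such that for every integer k ≠ 0, the Fourier coefficient c_k(f̂_c − f_c) = (1/2)∫_{−1}^{0} P_r(F̂ − F)(x) e^{−πikx} dx satisfies |c_k(f̂_c − f_c)| ≤ (C/k²) ‖F̂ − F‖_max. -/

import Mathlib

open Real Set

noncomputable section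

/-- The Hermite basis polynomial
`P_m^0(x) = (1/m!) x^m (1+x)^{r+1} ∑_{n=0}^{r-m} (-x)^n C(r+n, n)`. -/
def P0 (r m : ℕ) (x : ℝ) : ℝ :=
  (1 / (Nat.factorial m) : ℝ) * x ^ m * (1 + x) ^ (r + 1) *
    ∑ n ∈ Finset.range (r - m + 1), (-x) ^ n * (Nat.choose (r + n) n : ℝ)

/-- The Hermite basis polynomial
`P_m^1(x) = (1/m!) (1+x)^m (-x)^{r+1} ∑_{n=0}^{r-m} (1+x)^n C(r+n, n)`. -/
def P1 (r m : ℕ) (x : ℝ) : ℝ :=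
  (1 / (Nat.factorial m) : ℝ) * (1 + x) ^ m * (-x) ^ (r + 1) *
    ∑ n ∈ Finset.range (r - m + 1), (1 + x) ^ n * (Nat.choose (r + n) n : ℝ)

/-- The two-point Hermite interpolation polynomial `P_r(F̂)` of a boundary
data matrix `F̂`. -/
def Pmat (r : ℕ) (A : Fin 2 → Fin (r + 1) → ℝ) (x : ℝ) : ℝ :=
  ∑ m : Fin (r + 1), A 0 m * P0 r (m : ℕ) x + ∑ m : Fin (r + 1), A 1 m * P1 r (m : ℕ) x

/-- The max-norm of a `2 × (r+1)` matrix. -/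
def maxNorm {r : ℕ} (A : Fin 2 → Fin (r + 1) → ℝ) : ℝ :=
  Finset.univ.sup' Finset.univ_nonempty (fun p : Fin 2 × Fin (r + 1) => |A p.1 p.2|)

open MeasureTheory

/-- Fourier coefficient of `g` on `[-1, 1]`. -/
def fCoeff2 (g : ℝ → ℝ) (k : ℤ) : ℂ :=
  (1 / 2 : ℂ) * ∫ x in (-1 : ℝ)..1,
    (g x : ℂ) * Complex.exp (-(π : ℂ) * Complex.I * (k : ℂ) * (x : ℂ))

/-- The class `C^{r,1}([lo,hi])`. -/
def Cr1 (r : ℕ) (lo hi : ℝ) (f : ℝ → ℝ) : Prop :=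
  ContDiffOn ℝ r f (Icc lo hi) ∧
    ∃ K : NNReal, LipschitzOnWith K (iteratedDerivWithin r f (Icc lo hi)) (Icc lo hi)

/-- The exact boundary data matrix `F` of `f`. -/
def Fmat (r : ℕ) (f : ℝ → ℝ) : Fin 2 → Fin (r + 1) → ℝ :=
  fun j m => iteratedDerivWithin (m : ℕ) f (Icc (0 : ℝ) 1) ((j : ℕ) : ℝ)

/-- Continuation of `f`: `f` on `[0,1]`, `g` for `x < 0`. -/
def extCont (f g : ℝ → ℝ) : ℝ → ℝ := fun x => if 0 ≤ x then f x else g x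

namespace HermiteAux
open Polynomial

def P0p (r m : ℕ) : Polynomial ℝ :=
  Polynomial.C (1 / (Nat.factorial m) : ℝ) * X ^ m * (1 + X) ^ (r + 1) *
    ∑ n ∈ Finset.range (r - m + 1), (-X) ^ n * Polynomial.C (Nat.choose (r + n) n : ℝ)

def P1p (r m : ℕ) : Polynomial ℝ :=
  Polynomial.C (1 / (Nat.factorial m) : ℝ) * (1 + X) ^ m * (-X) ^ (r + 1) *
    ∑ n ∈ Finset.range (r - m + 1), (1 + X) ^ n * Polynomial.C (Nat.choose (r + n) n : ℝ)

lemma P0p_eval (r m : ℕ) (x : ℝ) : (P0p r m).eval x = P0 r m x := by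
  simp [P0p, P0, eval_finset_sum]

lemma P1p_eval (r m : ℕ) (x : ℝ) : (P1p r m).eval x = P1 r m x := by
  simp [P1p, P1, eval_finset_sum]

def Pp (r : ℕ) (A : Fin 2 → Fin (r + 1) → ℝ) : Polynomial ℝ :=
  ∑ m : Fin (r + 1), A 0 m • P0p r (m : ℕ) + ∑ m : Fin (r + 1), A 1 m • P1p r (m : ℕ)

lemma Pp_eval (r : ℕ) (A : Fin 2 → Fin (r + 1) → ℝ) (x : ℝ) :
    (Pp r A).eval x = Pmat r A x := by
  simp [Pp, Pmat, eval_finset_sum, P0p_eval, P1p_eval]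

lemma Pmat_sub (r : ℕ) (A B : Fin 2 → Fin (r + 1) → ℝ) (x : ℝ) :
    Pmat r (fun j m => A j m - B j m) x = Pmat r A x - Pmat r B x := by
  simp [Pmat, sub_mul, Finset.sum_sub_distrib]; ring

lemma P0_at_zero (r : ℕ) (m : Fin (r + 1)) :
    P0 r (m : ℕ) 0 = if m = 0 then 1 else 0 := by
  rcases eq_or_ne m 0 with h | h
  · subst h
    simp only [P0, Fin.val_zero, pow_zero, Nat.factorial_zero, Nat.cast_one, neg_zero]
    rw [Finset.sum_eq_single 0]
    · simp
    · intro n _ hn; simp [zero_pow hn]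
    · simp
  · have : (m : ℕ) ≠ 0 := fun hm => h (Fin.ext hm)
    simp [P0, zero_pow this, h]

lemma P1_at_zero (r : ℕ) (m : Fin (r + 1)) : P1 r (m : ℕ) 0 = 0 := by
  simp [P1]

lemma P0_at_neg_one (r : ℕ) (m : Fin (r + 1)) : P0 r (m : ℕ) (-1) = 0 := by
  simp [P0]

lemma P1_at_neg_one (r : ℕ) (m : Fin (r + 1)) :
    P1 r (m : ℕ) (-1) = if m = 0 then 1 else 0 := by
  rcases eq_or_ne m 0 with h | h
  · subst h
    simp only [P1, Fin.val_zero, pow_zero, Nat.factorial_zero, Nat.cast_one]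
    rw [Finset.sum_eq_single 0]
    · norm_num
    · intro n _ hn; rw [show (1 : ℝ) + -1 = 0 by ring, zero_pow hn, zero_mul]
    · simp
  · have hm : (m : ℕ) ≠ 0 := fun hm => h (Fin.ext hm)
    rw [if_neg h]
    simp [P1, show (1 : ℝ) + -1 = 0 by ring, zero_pow hm]

lemma Pmat_at_zero (r : ℕ) (A : Fin 2 → Fin (r + 1) → ℝ) : Pmat r A 0 = A 0 0 := by
  simp only [Pmat, P0_at_zero, P1_at_zero, mul_zero, Finset.sum_const_zero, add_zero,
    mul_ite, mul_one]
  rw [Finset.sum_ite_eq' Finset.univ (0 : Fin (r + 1))]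
  simp

lemma Pmat_at_neg_one (r : ℕ) (A : Fin 2 → Fin (r + 1) → ℝ) : Pmat r A (-1) = A 1 0 := by
  simp only [Pmat, P0_at_neg_one, P1_at_neg_one, mul_zero, Finset.sum_const_zero, zero_add,
    mul_ite, mul_one]
  rw [Finset.sum_ite_eq' Finset.univ (0 : Fin (r + 1))]
  simp

def Bnd (p : Polynomial ℝ) : ℝ := ∑ i ∈ Finset.range (p.natDegree + 1), |p.coeff i|

lemma Bnd_nonneg (p : Polynomial ℝ) : 0 ≤ Bnd p :=
  Finset.sum_nonneg fun _ _ => abs_nonneg _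

lemma abs_eval_le (p : Polynomial ℝ) (x : ℝ) (hx : |x| ≤ 1) : |p.eval x| ≤ Bnd p := by
  rw [Polynomial.eval_eq_sum_range]
  refine (Finset.abs_sum_le_sum_abs _ _).trans (Finset.sum_le_sum fun i _ => ?_)
  rw [abs_mul, abs_pow]
  calc |p.coeff i| * |x| ^ i ≤ |p.coeff i| * 1 := by
        gcongr
        exact pow_le_one₀ (abs_nonneg x) hx
    _ = |p.coeff i| := mul_one _

lemma maxNorm_nonneg {r : ℕ} (A : Fin 2 → Fin (r + 1) → ℝ) : 0 ≤ maxNorm A :=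
  le_trans (abs_nonneg (A 0 0))
    (Finset.le_sup' (fun p : Fin 2 × Fin (r + 1) => |A p.1 p.2|)
      (Finset.mem_univ ((0 : Fin 2), (0 : Fin (r + 1)))))

lemma abs_entry_le {r : ℕ} (A : Fin 2 → Fin (r + 1) → ℝ) (j : Fin 2) (m : Fin (r + 1)) :
    |A j m| ≤ maxNorm A :=
  Finset.le_sup' (fun p : Fin 2 × Fin (r + 1) => |A p.1 p.2|) (Finset.mem_univ (j, m))

lemma eval_bound (r : ℕ) (A : Fin 2 → Fin (r + 1) → ℝ)
    (g : Polynomial ℝ →ₗ[ℝ] Polynomial ℝ) (x : ℝ) (hx : |x| ≤ 1) :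
    |(g (Pp r A)).eval x| ≤
      maxNorm A * ∑ m : Fin (r + 1), (Bnd (g (P0p r (m : ℕ))) + Bnd (g (P1p r (m : ℕ)))) := by
  have key : (g (Pp r A)).eval x
      = ∑ m : Fin (r + 1), (A 0 m * (g (P0p r (m : ℕ))).eval x
          + A 1 m * (g (P1p r (m : ℕ))).eval x) := by
    simp only [Pp, map_add, map_sum, _root_.map_smul, eval_add, Polynomial.eval_finset_sum,
      Polynomial.eval_smul, smul_eq_mul, ← Finset.sum_add_distrib]
  rw [key, Finset.mul_sum]
  refine (Finset.abs_sum_le_sum_abs _ _).trans (Finset.sum_le_sum fun m _ => ?_)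
  rw [mul_add]
  refine (abs_add_le _ _).trans (add_le_add ?_ ?_) <;>
    · rw [abs_mul]
      exact mul_le_mul (abs_entry_le A _ m) (abs_eval_le _ x hx) (abs_nonneg _)
        (maxNorm_nonneg A)

lemma ibp (p : Polynomial ℝ) (c : ℂ) (hc : c ≠ 0) :
    ∫ x in (-1 : ℝ)..0, ((p.eval x : ℝ) : ℂ) * Complex.exp (c * x)
      = (((p.eval 0 : ℝ) : ℂ) * (Complex.exp (c * (0 : ℝ)) / c)
          - ((p.eval (-1) : ℝ) : ℂ) * (Complex.exp (c * (-1 : ℝ)) / c))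
        - (∫ x in (-1 : ℝ)..0, ((p.derivative.eval x : ℝ) : ℂ) * Complex.exp (c * x)) / c := by
  have D : ∀ x : ℝ, HasDerivAt (fun y : ℝ => Complex.exp (c * y) / c)
      (Complex.exp (c * x)) x := by
    intro x
    rw [← mul_div_cancel_right₀ (Complex.exp (c * x)) hc]
    apply ((Complex.hasDerivAt_exp _).comp (x : ℝ) _).div_const c
    simpa only [mul_one, id_eq] using ((hasDerivAt_id (x : ℂ)).const_mul c).comp_ofReal
  have Du : ∀ x : ℝ, HasDerivAt (fun y : ℝ => ((p.eval y : ℝ) : ℂ))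
      ((p.derivative.eval x : ℝ) : ℂ) x := fun x => (p.hasDerivAt x).ofReal_comp
  have h1 : IntervalIntegrable (fun x : ℝ => ((p.derivative.eval x : ℝ) : ℂ))
      MeasureTheory.volume (-1 : ℝ) 0 :=
    (Complex.continuous_ofReal.comp p.derivative.continuous).intervalIntegrable _ _
  have h2 : IntervalIntegrable (fun x : ℝ => Complex.exp (c * x))
      MeasureTheory.volume (-1 : ℝ) 0 :=
    (Complex.continuous_exp.comp
      (continuous_const.mul Complex.continuous_ofReal)).intervalIntegrable _ _
  have H := intervalIntegral.integral_mul_deriv_eq_deriv_mul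
    (fun x _ => Du x) (fun x _ => D x) h1 h2
  rw [H]
  congr 1
  rw [← intervalIntegral.integral_div]
  exact intervalIntegral.integral_congr fun x _ => (mul_div_assoc _ _ _).symm

end HermiteAux

open HermiteAux Polynomial

set_option maxHeartbeats 1000000 in
/-- For a `0`-exact boundary data matrix `F̂`, the Fourier coefficients of the
difference of the Hermite continuations built from `F̂` and from the exact data `F`
satisfy `c_k(f̂_c - f_c) = (1/2)∫_{-1}^0 P_r(F̂-F)(x) e^{-πikx} dx` and decay like
`(C/k²) ‖F̂ - F‖_max`, with `C > 0` depending only on `r`. -/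
theorem hermite_coeff_difference_decay (r : ℕ) (hr : 1 ≤ r) :
    ∃ C > 0, ∀ f : ℝ → ℝ, Cr1 r 0 1 f →
      ∀ Fh : Fin 2 → Fin (r + 1) → ℝ,
        (Fh 0 0 = Fmat r f 0 0 ∧ Fh 1 0 = Fmat r f 1 0) →
        ∀ k : ℤ, k ≠ 0 →
          fCoeff2 (fun x => extCont f (Pmat r Fh) x - extCont f (Pmat r (Fmat r f)) x) k
            = (1 / 2 : ℂ) * ∫ x in (-1 : ℝ)..0,
                ((Pmat r (fun j m => Fh j m - Fmat r f j m) x : ℝ) : ℂ) *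
                  Complex.exp (-(π : ℂ) * Complex.I * (k : ℂ) * (x : ℂ)) ∧
          ‖(fCoeff2 (fun x => extCont f (Pmat r Fh) x - extCont f (Pmat r (Fmat r f)) x) k)‖
            ≤ C / (k : ℝ) ^ 2 * maxNorm (fun j m => Fh j m - Fmat r f j m) := by
  classical
  set g1 : Polynomial ℝ →ₗ[ℝ] Polynomial ℝ := Polynomial.derivative with hg1
  set g2 : Polynomial ℝ →ₗ[ℝ] Polynomial ℝ :=
    (Polynomial.derivative : Polynomial ℝ →ₗ[ℝ] Polynomial ℝ).comp Polynomial.derivative with hg2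
  set M1 : ℝ := ∑ m : Fin (r + 1), (Bnd (g1 (P0p r (m : ℕ))) + Bnd (g1 (P1p r (m : ℕ)))) with hM1
  set M2 : ℝ := ∑ m : Fin (r + 1), (Bnd (g2 (P0p r (m : ℕ))) + Bnd (g2 (P1p r (m : ℕ)))) with hM2
  have hM1n : 0 ≤ M1 := Finset.sum_nonneg fun _ _ => add_nonneg (Bnd_nonneg _) (Bnd_nonneg _)
  have hM2n : 0 ≤ M2 := Finset.sum_nonneg fun _ _ => add_nonneg (Bnd_nonneg _) (Bnd_nonneg _)
  refine ⟨M1 + M2 + 1, by linarith, ?_⟩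
  intro f _hf Fh hex k hk
  set D : Fin 2 → Fin (r + 1) → ℝ := fun j m => Fh j m - Fmat r f j m with hD
  set Q : Polynomial ℝ := Pp r D with hQ
  have hD00 : D 0 0 = 0 := by simp [hD, hex.1]
  have hD10 : D 1 0 = 0 := by simp [hD, hex.2]
  have hQ0 : Q.eval 0 = 0 := by rw [hQ, Pp_eval, Pmat_at_zero]; exact hD00
  have hQ1 : Q.eval (-1) = 0 := by rw [hQ, Pp_eval, Pmat_at_neg_one]; exact hD10
  set c : ℂ := -(π : ℂ) * Complex.I * (k : ℂ) with hcdef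
  have hkc : ((k : ℂ)) ≠ 0 := Int.cast_ne_zero.mpr hk
  have hc : c ≠ 0 := by
    refine mul_ne_zero (mul_ne_zero ?_ Complex.I_ne_zero) hkc
    simpa using Complex.ofReal_ne_zero.mpr Real.pi_ne_zero
  have habsc : ‖c‖ = π * |(k : ℝ)| := by
    rw [hcdef]
    simp [norm_mul, Complex.norm_real, abs_of_pos Real.pi_pos, Complex.norm_intCast]
  have habse : ∀ x : ℝ, ‖Complex.exp (c * x)‖ = 1 := by
    intro x
    have : c * (x : ℂ) = ((-π * (k : ℝ) * x : ℝ) : ℂ) * Complex.I := by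
      rw [hcdef]; push_cast; ring
    rw [this, Complex.norm_exp_ofReal_mul_I]
  set h : ℝ → ℝ := fun x => extCont f (Pmat r Fh) x - extCont f (Pmat r (Fmat r f)) x with hh
  set φ : ℝ → ℂ := fun x => ((Q.eval x : ℝ) : ℂ) * Complex.exp (c * x) with hφ
  have hcontφ : Continuous φ := by
    rw [hφ]
    exact (Complex.continuous_ofReal.comp Q.continuous).mul
      (Complex.continuous_exp.comp (continuous_const.mul Complex.continuous_ofReal))
  set G : ℝ → ℂ := fun x => ((h x : ℝ) : ℂ) * Complex.exp (c * x) with hG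
  have heq1 : EqOn G φ (uIcc (-1 : ℝ) 0) := by
    intro x hx
    rw [uIcc_of_le (by norm_num)] at hx
    have hx0 : x ≤ 0 := hx.2
    have hval : h x = Q.eval x := by
      rcases lt_or_eq_of_le hx0 with hlt | heq
      · have hne : ¬ (0 ≤ x) := not_le.mpr hlt
        rw [hh]
        simp only [extCont, if_neg hne]
        rw [hQ, Pp_eval, hD, Pmat_sub]
      · subst heq
        rw [hh, hQ0]
        simp [extCont]
    simp only [hG, hφ, hval]
  have heq2 : EqOn G 0 (uIcc (0 : ℝ) 1) := by
    intro x hx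
    rw [uIcc_of_le (by norm_num)] at hx
    have : h x = 0 := by rw [hh]; simp [extCont, if_pos hx.1]
    simp [hG, this]
  have hint1 : IntervalIntegrable G MeasureTheory.volume (-1 : ℝ) 0 :=
    (hcontφ.continuousOn.congr heq1).intervalIntegrable
  have hint2 : IntervalIntegrable G MeasureTheory.volume (0 : ℝ) 1 :=
    (continuousOn_const.congr heq2).intervalIntegrable
  have hsplit : (∫ x in (-1 : ℝ)..1, G x) = ∫ x in (-1 : ℝ)..0, φ x := by
    rw [← intervalIntegral.integral_add_adjacent_intervals hint1 hint2]
    rw [intervalIntegral.integral_congr heq1, intervalIntegral.integral_congr heq2]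
    simp
  have hcoeff : fCoeff2 h k = (1 / 2 : ℂ) * ∫ x in (-1 : ℝ)..1, G x := by
    simp only [fCoeff2, hG, hcdef]
  have hmatch : (∫ x in (-1 : ℝ)..0, φ x)
      = ∫ x in (-1 : ℝ)..0, ((Pmat r D x : ℝ) : ℂ) * Complex.exp (c * x) := by
    refine intervalIntegral.integral_congr fun x _ => ?_
    simp only [hφ, hQ, Pp_eval]
  constructor
  · rw [hcoeff, hsplit, hmatch]
  -- the quantitative bound
  set I1 : ℂ := ∫ x in (-1 : ℝ)..0, ((Q.derivative.eval x : ℝ) : ℂ) * Complex.exp (c * x) with hI1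
  set I2 : ℂ := ∫ x in (-1 : ℝ)..0, ((Q.derivative.derivative.eval x : ℝ) : ℂ) *
      Complex.exp (c * x) with hI2
  have hIval : (∫ x in (-1 : ℝ)..0, φ x) = -(I1 / c) := by
    have h1 : (∫ x in (-1 : ℝ)..0, φ x)
        = ∫ x in (-1 : ℝ)..0, ((Q.eval x : ℝ) : ℂ) * Complex.exp (c * x) := by
      refine intervalIntegral.integral_congr fun x _ => ?_
      simp only [hφ]
    rw [h1, ibp Q c hc, hQ0, hQ1, ← hI1]
    simp
  have tri : ∀ a b : ℂ, ‖a - b‖ ≤ ‖a‖ + ‖b‖ := by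
    intro a b
    exact norm_sub_le a b
  have hQ'bd : ∀ x : ℝ, |x| ≤ 1 → |Q.derivative.eval x| ≤ maxNorm D * M1 := by
    intro x hx
    have := eval_bound r D g1 x hx
    rw [← hQ] at this
    simpa [hg1, hM1] using this
  have hQ''bd : ∀ x : ℝ, |x| ≤ 1 → |Q.derivative.derivative.eval x| ≤ maxNorm D * M2 := by
    intro x hx
    have := eval_bound r D g2 x hx
    rw [← hQ] at this
    simpa [hg2, hM2, LinearMap.comp_apply] using this
  have hI2bd : ‖I2‖ ≤ maxNorm D * M2 := by
    have hle := intervalIntegral.norm_integral_le_of_norm_le_const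
      (C := maxNorm D * M2) (f := fun x : ℝ => ((Q.derivative.derivative.eval x : ℝ) : ℂ) *
        Complex.exp (c * x)) (a := (-1 : ℝ)) (b := 0) ?_
    · rw [hI2]
      simpa using hle
    · intro x hx
      rw [uIoc_of_le (by norm_num : (-1 : ℝ) ≤ 0)] at hx
      have hx1 : |x| ≤ 1 := abs_le.mpr ⟨hx.1.le, le_trans hx.2 (by norm_num)⟩
      rw [norm_mul, habse, mul_one,
        Complex.norm_real, Real.norm_eq_abs]
      exact hQ''bd x hx1
  have hI1bd : ‖I1‖ ≤ (2 * (maxNorm D * M1) + maxNorm D * M2) / ‖c‖ := by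
    rw [hI1, ibp Q.derivative c hc, ← hI2]
    have e0 : ‖((Q.derivative.eval 0 : ℝ) : ℂ) *
        (Complex.exp (c * (0 : ℝ)) / c)‖
        = |Q.derivative.eval 0| / ‖c‖ := by
      rw [norm_mul, norm_div, habse, Complex.norm_real, Real.norm_eq_abs]; ring
    have e1 : ‖((Q.derivative.eval (-1) : ℝ) : ℂ) *
        (Complex.exp (c * (-1 : ℝ)) / c)‖
        = |Q.derivative.eval (-1)| / ‖c‖ := by
      rw [norm_mul, norm_div, habse, Complex.norm_real, Real.norm_eq_abs]; ring
    calc ‖(((Q.derivative.eval 0 : ℝ) : ℂ) * (Complex.exp (c * (0 : ℝ)) / c)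
            - ((Q.derivative.eval (-1) : ℝ) : ℂ) * (Complex.exp (c * (-1 : ℝ)) / c)) - I2 / c‖
          ≤ (‖((Q.derivative.eval 0 : ℝ) : ℂ) * (Complex.exp (c * (0 : ℝ)) / c)‖
            + ‖((Q.derivative.eval (-1) : ℝ) : ℂ)
              * (Complex.exp (c * (-1 : ℝ)) / c)‖) + ‖I2 / c‖ := by
          refine (tri _ _).trans ?_
          gcongr
          exact tri _ _
      _ = (|Q.derivative.eval 0| + |Q.derivative.eval (-1)| + ‖I2‖) /
            ‖c‖ := by
          rw [e0, e1, norm_div]; ring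
      _ ≤ (2 * (maxNorm D * M1) + maxNorm D * M2) / ‖c‖ := by
          gcongr ?x / _
          have h0 := hQ'bd 0 (by norm_num)
          have h1 := hQ'bd (-1) (by norm_num)
          nlinarith [hI2bd]
  have habsc_pos : 0 < ‖c‖ := norm_pos_iff.mpr hc
  have hk2pos : (0 : ℝ) < (k : ℝ) ^ 2 := by
    have hkr : ((k : ℝ)) ≠ 0 := Int.cast_ne_zero.mpr hk
    positivity
  have hk2le : ((k : ℝ)) ^ 2 ≤ ‖c‖ * ‖c‖ := by
    rw [habsc]
    have hpi : (1 : ℝ) ≤ π := by linarith [Real.pi_gt_three]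
    have h2 : |(k : ℝ)| ≤ π * |(k : ℝ)| := le_mul_of_one_le_left (abs_nonneg _) hpi
    calc ((k : ℝ)) ^ 2 = |(k : ℝ)| * |(k : ℝ)| := by rw [abs_mul_abs_self]; ring
      _ ≤ (π * |(k : ℝ)|) * (π * |(k : ℝ)|) :=
          mul_le_mul h2 h2 (abs_nonneg _) (by positivity)
  have hN : 0 ≤ maxNorm D := maxNorm_nonneg D
  have hS : 0 ≤ 2 * (maxNorm D * M1) + maxNorm D * M2 :=
    add_nonneg (mul_nonneg zero_le_two (mul_nonneg hN hM1n)) (mul_nonneg hN hM2n)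
  calc ‖fCoeff2 h k‖
      = (1 / 2) * (‖I1‖ / ‖c‖) := by
        rw [hcoeff, hsplit, hIval, norm_mul]
        have hn : ‖(-(I1 / c))‖ = ‖I1‖ / ‖c‖ := by
          rw [norm_neg, norm_div]
        rw [hn]
        norm_num
    _ ≤ (1 / 2) * ((2 * (maxNorm D * M1) + maxNorm D * M2) / ‖c‖ / ‖c‖) := by
        gcongr
    _ = (1 / 2) * ((2 * (maxNorm D * M1) + maxNorm D * M2) / (‖c‖ * ‖c‖)) := by
        rw [div_div]
    _ ≤ (1 / 2) * ((2 * (maxNorm D * M1) + maxNorm D * M2) / (k : ℝ) ^ 2) := by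
        exact mul_le_mul_of_nonneg_left (div_le_div_of_nonneg_left hS hk2pos hk2le) (by norm_num)
    _ ≤ (M1 + M2 + 1) / (k : ℝ) ^ 2 * maxNorm D := by
        have e1 : (1 / 2 : ℝ) * ((2 * (maxNorm D * M1) + maxNorm D * M2) / (k : ℝ) ^ 2)
            = (maxNorm D * M1 + maxNorm D * M2 / 2) / (k : ℝ) ^ 2 := by ring
        have e2 : (M1 + M2 + 1) / (k : ℝ) ^ 2 * maxNorm D
            = ((M1 + M2 + 1) * maxNorm D) / (k : ℝ) ^ 2 := by ring
        rw [e1, e2]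
        gcongr
        nlinarith [mul_nonneg hN hM2n, hN]
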